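/- arXiv:0911.5389 — 3 statements merged into one kernel-verified Lean document; each statement's English description precedes it below -/
import Mathlib

section
/- Residue cancellation at colors 1,…,r: Assume the Bethe ansatz equations hold. Then for every d with 1 ≤ d ≤ r and every k ∈ {1,…,N_d}, the residue of z(d;u) + z(d+1;u) at u = −d + u_k^{(d)} vanishes; that is, lim_{u → −d + u_k^{(d)}} (u + d − u_k^{(d)})·(z(d;u) + z(d+1;u)) = 0. -/
open Complex Filter Topology

namespace AnalyticBethe

/-- The data of the analytic Bethe ansatz for `sl(r+1|s+1)`:
a generic deformation parameter `q` (with a fixed logarithm `Lq`),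
Bethe roots `root a j` of each color `a ∈ {1,…,r+s+1}` (0-indexed here),
and inhomogeneities `w j` together with the parameters `bw j` (the `(r+1)`-th
Kac–Dynkin labels of the quantum space) at each of `L` sites. -/
structure Setup (r s : ℕ) where
  q : ℂ
  Lq : ℂ
  hexp : Complex.exp Lq = q
  hq0 : q ≠ 0
  hgen : ∀ n : ℕ, 0 < n → q ^ n ≠ 1
  Nb : Fin (r + s + 1) → ℕ
  root : (a : Fin (r + s + 1)) → Fin (Nb a) → ℂ
  L : ℕ
  w : Fin L → ℂ
  bw : Fin L → ℂ

variable {r s : ℕ}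

/-- The `q`-number `[u] = (q^u - q^{-u})/(q - q⁻¹)`. -/
noncomputable def Setup.br (S : Setup r s) (u : ℂ) : ℂ :=
  (Complex.exp (u * S.Lq) - Complex.exp (-(u * S.Lq))) / (S.q - S.q⁻¹)

/-- `Q_a(u) = ∏_j [u - u_j^{(a)}]` for `1 ≤ a ≤ r+s+1`, and `Q_0 = Q_{r+s+2} = 1`. -/
noncomputable def Setup.Q (S : Setup r s) (a : ℕ) (u : ℂ) : ℂ :=
  if h : 1 ≤ a ∧ a ≤ r + s + 1 then
    have ha : a - 1 < r + s + 1 := by omega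
    ∏ j : Fin (S.Nb ⟨a - 1, ha⟩), S.br (u - S.root ⟨a - 1, ha⟩ j)
  else 1

/-- The vacuum parts `ψ_a(u)`. -/
noncomputable def Setup.psi (S : Setup r s) (a : ℕ) (u : ℂ) : ℂ :=
  if a ≤ r + 1 then 1
  else ∏ j : Fin S.L,
    S.br (u - S.w j + (r : ℂ) + 1 - S.bw j) / S.br (u - S.w j + (r : ℂ) + 1 + S.bw j)

/-- The functions `z(a;u)`, `a ∈ J = {1,…,r+s+2}`. -/
noncomputable def Setup.z (S : Setup r s) (a : ℕ) (u : ℂ) : ℂ :=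
  if a ≤ r + 1 then
    S.psi a u * S.Q (a - 1) (u + (a : ℂ) + 1) * S.Q a (u + (a : ℂ) - 2) /
      (S.Q (a - 1) (u + (a : ℂ) - 1) * S.Q a (u + (a : ℂ)))
  else
    S.psi a u * S.Q (a - 1) (u + 2 * (r : ℂ) - (a : ℂ) + 1) *
        S.Q a (u + 2 * (r : ℂ) - (a : ℂ) + 4) /
      (S.Q (a - 1) (u + 2 * (r : ℂ) - (a : ℂ) + 3) *
        S.Q a (u + 2 * (r : ℂ) - (a : ℂ) + 2))

/-- The denominator of `z(a;u)` coming from the `Q`-functions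
(the vacuum parts `ψ` are disregarded). -/
noncomputable def Setup.zDen (S : Setup r s) (a : ℕ) (u : ℂ) : ℂ :=
  if a ≤ r + 1 then S.Q (a - 1) (u + (a : ℂ) - 1) * S.Q a (u + (a : ℂ))
  else S.Q (a - 1) (u + 2 * (r : ℂ) - (a : ℂ) + 3) *
       S.Q a (u + 2 * (r : ℂ) - (a : ℂ) + 2)

/-- The bilinear pairing `(α_a|α_b)` of the distinguished simple roots of `sl(r+1|s+1)`. -/
def cartan (r : ℕ) (a b : ℕ) : ℤ :=
  if a = b then (if a ≤ r then 2 else if a = r + 1 then 0 else -2)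
  else if b = a + 1 ∨ a = b + 1 then (if min a b ≤ r then -1 else 1)
  else 0

/-- The Bethe ansatz equations (BAE).  Here the color `a ∈ {1,…,r+s+1}` is represented
by `a.1 + 1` for `a : Fin (r+s+1)`; `t_a = 1` for `a ≤ r+1` and `t_a = -1` otherwise,
and the Kac–Dynkin labels of the quantum space are `b_j^{(a)} = δ_{a,r+1}·bw j`. -/
def Setup.BAE (S : Setup r s) : Prop :=
  ∀ (a : Fin (r + s + 1)) (k : Fin (S.Nb a)),
    -(∏ j : Fin S.L,
        S.br (S.root a k - S.w j +
          (if a.1 + 1 = r + 1 then (1 : ℂ) else 0) * S.bw j /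
            (if a.1 + 1 ≤ r + 1 then (1 : ℂ) else -1)) /
        S.br (S.root a k - S.w j -
          (if a.1 + 1 = r + 1 then (1 : ℂ) else 0) * S.bw j /
            (if a.1 + 1 ≤ r + 1 then (1 : ℂ) else -1)))
    = (-1 : ℂ) ^ (if a.1 + 1 = r + 1 then 1 else 0) *
      ∏ b : Fin (r + s + 1),
        S.Q (b.1 + 1) (S.root a k + (cartan r (a.1 + 1) (b.1 + 1) : ℂ)) /
          S.Q (b.1 + 1) (S.root a k - (cartan r (a.1 + 1) (b.1 + 1) : ℂ))

/-- Genericity of the Bethe roots: each `Q_a` has a simple zero at each Bethe root of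
color `a`, and no `Q_b` vanishes at any other integral shift of a Bethe root; hence all
potential poles arising from zeros of `Q`-functions in denominators are simple. -/
def Setup.Generic (S : Setup r s) : Prop :=
  (∀ (a : Fin (r + s + 1)) (k : Fin (S.Nb a)),
      deriv (S.Q (a.1 + 1)) (S.root a k) ≠ 0) ∧
  (∀ (a : Fin (r + s + 1)) (k : Fin (S.Nb a)) (b : ℕ) (m : ℤ),
      1 ≤ b → b ≤ r + s + 1 → (b ≠ a.1 + 1 ∨ m ≠ 0) →
      S.Q b (S.root a k + (m : ℂ)) ≠ 0)

/-- A Young diagram, presented as an antitone, eventually-zero sequence of row lengths.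
`part i` is the length `μ_{i+1}` of the `(i+1)`-th row (0-indexed). -/
structure YD where
  part : ℕ → ℕ
  len : ℕ
  anti : ∀ ⦃i j : ℕ⦄, i ≤ j → part j ≤ part i
  zero : ∀ i, len ≤ i → part i = 0

/-- `conj μ j = μ′_{j+1}`, the length of the `(j+1)`-th column (0-indexed). -/
def YD.conj (μ : YD) (j : ℕ) : ℕ :=
  ((Finset.range μ.len).filter (fun i => j < μ.part i)).card

/-- The empty Young diagram. -/
def emptyYD : YD where
  part := fun _ => 0
  len := 0
  anti := fun _ _ _ => le_refl 0
  zero := fun _ _ => rfl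

/-- The rectangular Young diagram `(m^a)` with `a` rows of length `m`. -/
def rect (m a : ℕ) : YD where
  part := fun i => if i < a then m else 0
  len := a
  anti := by intro i j hij; split_ifs <;> omega
  zero := by intro i hi; rw [if_neg (by omega)]

/-- `μ + (c^k)`: add `c` columns to the first `k` rows. -/
def muPlus (mu : YD) (c k : ℕ) : YD where
  part := fun i => if i < k then mu.part i + c else mu.part i
  len := max mu.len k
  anti := by
    intro i j hij
    have h := mu.anti hij
    split_ifs <;> omega
  zero := by
    intro i hi
    have h1 : mu.len ≤ i := le_trans (le_max_left _ _) hi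
    have h2 : k ≤ i := le_trans (le_max_right _ _) hi
    rw [if_neg (by omega), mu.zero i h1]

/-- The first `k` rows `(μ₁,…,μ_k)` of `μ`. -/
def truncate (mu : YD) (k : ℕ) : YD where
  part := fun i => if i < k then mu.part i else 0
  len := min mu.len k
  anti := by
    intro i j hij
    have h := mu.anti hij
    split_ifs <;> omega
  zero := by
    intro i hi
    split_ifs with h
    · exact mu.zero i (by omega)
    · rfl

/-- The rows of `μ` below the `k`-th one: `(μ_{k+1}, μ_{k+2}, …)`. -/
def shiftRows (mu : YD) (k : ℕ) : YD where
  part := fun i => mu.part (i + k)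
  len := mu.len - k
  anti := fun i j hij => mu.anti (by omega)
  zero := fun i hi => mu.zero (i + k) (by omega)

/-- The cells of a skew Young diagram `λ ⊂ μ`, in (1-indexed) matrix coordinates:
`(i,j)` with `1 ≤ i`, `λ_i < j ≤ μ_i`. -/
def cells (lam mu : YD) : Finset (ℕ × ℕ) :=
  (Finset.Icc 1 mu.len ×ˢ Finset.Icc 1 (mu.part 0)).filter
    (fun p => lam.part (p.1 - 1) < p.2 ∧ p.2 ≤ mu.part (p.1 - 1))

abbrev Cell (lam mu : YD) := {x : ℕ × ℕ // x ∈ cells lam mu}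

/-- A tableau on the skew diagram `λ ⊂ μ`: an assignment of an element of
`J = {1,…,r+s+2}` (encoded by `Fin (r+s+2)`) to every cell. -/
abbrev Tab (r s : ℕ) (lam mu : YD) := Cell lam mu → Fin (r + s + 2)

/-- The entry of a tableau at a cell, as an element of `J = {1,…,r+s+2}`. -/
def entry {lam mu : YD} (t : Tab r s lam mu) (p : Cell lam mu) : ℕ := (t p).1 + 1

/-- Admissibility of a tableau: entries weakly increase along rows and down columns,
two equal adjacent entries in a row must lie in `J₊ = {1,…,r+1}`, and two equal adjacent
entries in a column must lie in `J₋ = {r+2,…,r+s+2}`. -/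
def Adm (r s : ℕ) (lam mu : YD) (t : Tab r s lam mu) : Prop :=
  ∀ p q : Cell lam mu,
    (q.1.1 = p.1.1 ∧ q.1.2 = p.1.2 + 1 →
      entry t p ≤ entry t q ∧ (entry t p = entry t q → entry t p ≤ r + 1)) ∧
    (q.1.1 = p.1.1 + 1 ∧ q.1.2 = p.1.2 →
      entry t p ≤ entry t q ∧ (entry t p = entry t q → r + 2 ≤ entry t p))

open Classical in
/-- The dressed vacuum form `T_{λ⊂μ}(u)`:
`∑_{admissible b} ∏_{(i,j)} (−1)^{p(b(i,j))} z(b(i,j); u − μ₁ + μ₁′ − 2i + 2j)`. -/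
noncomputable def Tfun (S : Setup r s) (lam mu : YD) (u : ℂ) : ℂ :=
  ∑ t : Tab r s lam mu,
    if Adm r s lam mu t then
      ∏ p : Cell lam mu,
        (-1 : ℂ) ^ (if entry t p ≤ r + 1 then 0 else 1) *
          S.z (entry t p)
            (u - (mu.part 0 : ℂ) + (mu.conj 0 : ℂ) - 2 * (p.1.1 : ℂ) + 2 * (p.1.2 : ℂ))
    else 0

/-- Admissibility with all entries restricted to `J₋ = {r+2,…,r+s+2}`. -/
def AdmH (r s : ℕ) (nu : YD) (t : Tab r s emptyYD nu) : Prop :=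
  Adm r s emptyYD nu t ∧ ∀ p : Cell emptyYD nu, r + 2 ≤ entry t p

open Classical in
/-- `H_ν(u)`: the same tableau sum as `T_ν(u)`, restricted to tableaux with all
entries in `J₋`. -/
noncomputable def Hfun (S : Setup r s) (nu : YD) (u : ℂ) : ℂ :=
  ∑ t : Tab r s emptyYD nu,
    if AdmH r s nu t then
      ∏ p : Cell emptyYD nu,
        (-1 : ℂ) ^ (if entry t p ≤ r + 1 then 0 else 1) *
          S.z (entry t p)
            (u - (nu.part 0 : ℂ) + (nu.conj 0 : ℂ) - 2 * (p.1.1 : ℂ) + 2 * (p.1.2 : ℂ))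
    else 0

/-- The potential poles of `T_{λ⊂μ}`: the points where the `Q`-denominator of some
`z`-factor of some admissible summand vanishes (vacuum parts disregarded). -/
def PotPole (S : Setup r s) (lam mu : YD) : Set ℂ :=
  {p | ∃ t : Tab r s lam mu, Adm r s lam mu t ∧
    ∃ q : Cell lam mu,
      S.zDen (entry t q)
        (p - (mu.part 0 : ℂ) + (mu.conj 0 : ℂ) - 2 * (q.1.1 : ℂ) + 2 * (q.1.2 : ℂ)) = 0}

/-- The potential poles of `H_ν` (vacuum parts disregarded). -/
def PotPoleH (S : Setup r s) (nu : YD) : Set ℂ :=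
  {p | ∃ t : Tab r s emptyYD nu, AdmH r s nu t ∧
    ∃ q : Cell emptyYD nu,
      S.zDen (entry t q)
        (p - (nu.part 0 : ℂ) + (nu.conj 0 : ℂ) - 2 * (q.1.1 : ℂ) + 2 * (q.1.2 : ℂ)) = 0}

/-- The deformed dressed vacuum form `T̃_{μ;c}(u)` for `c ∈ ℂ`. -/
noncomputable def Ttilde (S : Setup r s) (mu : YD) (c : ℂ) (u : ℂ) : ℂ :=
  S.Q (r + 1) (u - c + (mu.conj 0 : ℂ) - (mu.part 0 : ℂ) - (r : ℂ) - 1) /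
    S.Q (r + 1) (u + c + (mu.conj 0 : ℂ) - (mu.part 0 : ℂ) - (r : ℂ) - 1) *
    Tfun S emptyYD (truncate mu (r + 1)) (u + (mu.conj 0 : ℂ) + c - (r : ℂ) - 1) *
    Hfun S (shiftRows mu (r + 1))
      (u - (mu.part 0 : ℂ) + (mu.part (r + 1) : ℂ) - c - (r : ℂ) - 1)

/-- The potential poles of `T̃_{μ;c}` (vacuum parts disregarded). -/
def PotPoleTilde (S : Setup r s) (mu : YD) (c : ℂ) : Set ℂ :=
  {p | S.Q (r + 1) (p + c + (mu.conj 0 : ℂ) - (mu.part 0 : ℂ) - (r : ℂ) - 1) = 0 ∨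
    (p + (mu.conj 0 : ℂ) + c - (r : ℂ) - 1) ∈ PotPole S emptyYD (truncate mu (r + 1)) ∨
    (p - (mu.part 0 : ℂ) + (mu.part (r + 1) : ℂ) - c - (r : ℂ) - 1) ∈
      PotPoleH S (shiftRows mu (r + 1))}

/-- `T̃^{r+1}_{c+s+1}(u)` for `c ∈ ℂ`. -/
noncomputable def TtildeRect (S : Setup r s) (c : ℂ) (u : ℂ) : ℂ :=
  S.Q (r + 1) (u - c - (s : ℂ) - 1) / S.Q (r + 1) (u + c - (s : ℂ) - 1) *
    Tfun S emptyYD (rect (s + 1) (r + 1)) (u + c)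

/-- The potential poles of `T̃^{r+1}_{c+s+1}` (vacuum parts disregarded). -/
def PotPoleTildeRect (S : Setup r s) (c : ℂ) : Set ℂ :=
  {p | S.Q (r + 1) (p + c - (s : ℂ) - 1) = 0 ∨
       (p + c) ∈ PotPole S emptyYD (rect (s + 1) (r + 1))}

/-- `T^a(u) = T_{(1^a)}(u)` extended by the conventions `T^0 = 1`, `T^a = 0` for `a < 0`. -/
noncomputable def Tcol (S : Setup r s) (a : ℤ) (u : ℂ) : ℂ :=
  if a < 0 then 0 else if a = 0 then 1 else Tfun S emptyYD (rect 1 a.toNat) u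

/-- `T_m^1(u) = T_{(m)}(u)` extended by the conventions `T_0^1 = 1`, `T_m^1 = 0` for `m < 0`. -/
noncomputable def Trow (S : Setup r s) (m : ℤ) (u : ℂ) : ℂ :=
  if m < 0 then 0 else if m = 0 then 1 else Tfun S emptyYD (rect m.toNat 1) u

/-- `H_1^a(u) = H_{(1^a)}(u)` extended by the conventions `H_1^0 = 1`, `H_1^a = 0` for `a < 0`. -/
noncomputable def Hcol (S : Setup r s) (a : ℤ) (u : ℂ) : ℂ :=
  if a < 0 then 0 else if a = 0 then 1 else Hfun S (rect 1 a.toNat) u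

lemma key_ne (S : Setup r s) (hGen : S.Generic) (d : ℕ) (hd1 : 1 ≤ d)
    (hlt : d - 1 < r + s + 1) (k : Fin (S.Nb ⟨d - 1, hlt⟩)) (b : ℕ) (m : ℤ)
    (hb : b ≤ r + s + 1) (h : b ≠ d ∨ m ≠ 0) :
    S.Q b (S.root ⟨d - 1, hlt⟩ k + (m : ℂ)) ≠ 0 := by
  rcases Nat.eq_zero_or_pos b with hb0 | hb1
  · subst hb0; simp [Setup.Q]
  · refine hGen.2 ⟨d-1,hlt⟩ k b m hb1 hb ?_
    rcases h with h | h
    · left; show b ≠ d - 1 + 1; omega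
    · right; exact h

lemma Setup.br_differentiable (S : Setup r s) : Differentiable ℂ S.br := by
  unfold Setup.br
  apply Differentiable.div_const
  exact (Complex.differentiable_exp.comp (differentiable_id.mul_const _)).sub
    (Complex.differentiable_exp.comp (differentiable_id.mul_const _).neg)

lemma Setup.Q_differentiable (S : Setup r s) (a : ℕ) : Differentiable ℂ (S.Q a) := by
  unfold Setup.Q
  split
  · intro x
    exact DifferentiableAt.fun_finsetProd fun j _ =>
      ((S.br_differentiable.comp (differentiable_id.sub_const _)) x)
  · exact differentiable_const 1

lemma main_aux (S : Setup r s) (d : ℕ) (hd1 : 1 ≤ d) (hd2 : d ≤ r) (x : ℂ)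
    (hQdx : S.Q d x = 0) (hD : deriv (S.Q d) x ≠ 0)
    (hsum : S.Q (d-1) (x+1) * S.Q d (x-2) * S.Q (d+1) (x+1)
          + S.Q (d-1) (x-1) * S.Q d (x+2) * S.Q (d+1) (x-1) = 0)
    (hne1 : S.Q (d-1) (x-1) ≠ 0) (hne2 : S.Q (d+1) (x+1) ≠ 0) :
    Filter.Tendsto
      (fun u : ℂ => (u + (d : ℂ) - x) * (S.z d u + S.z (d + 1) u))
      (𝓝[≠] (-(d : ℂ) + x)) (𝓝 0) := by
  have hder : HasDerivAt (S.Q d) (deriv (S.Q d) x) x := (S.Q_differentiable d x).hasDerivAt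
  have hslope : Tendsto (fun v => S.Q d v / (v - x)) (𝓝[≠] x) (𝓝 (deriv (S.Q d) x)) := by
    refine (hasDerivAt_iff_tendsto_slope.mp hder).congr (fun v => ?_)
    rw [slope_def_field, hQdx, sub_zero]
  have hmap : Tendsto (fun u : ℂ => u + (d : ℂ)) (𝓝[≠] (-(d : ℂ) + x)) (𝓝[≠] x) := by
    apply Filter.Tendsto.inf
    · have h := (continuous_id.add (continuous_const (y := (d : ℂ)))).tendsto (-(d : ℂ) + x)
      simpa [Pi.add_def] using h
    · refine tendsto_principal_principal.mpr (fun u hu => ?_)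
      simp only [Set.mem_compl_iff, Set.mem_singleton_iff] at hu ⊢
      intro h
      exact hu (by rw [← h]; ring)
  have hA : Tendsto (fun u : ℂ => (u + (d : ℂ) - x) / S.Q d (u + (d : ℂ)))
      (𝓝[≠] (-(d : ℂ) + x)) (𝓝 (deriv (S.Q d) x)⁻¹) := by
    have h := (hslope.inv₀ hD).comp hmap
    refine h.congr (fun u => ?_)
    simp [Function.comp, inv_div]
  -- the regular factor
  set F : ℂ → ℂ := fun u =>
      (S.Q (d-1) (u + (d:ℂ) + 1) * S.Q d (u + (d:ℂ) - 2) * S.Q (d+1) (u + (d:ℂ) + 1)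
       + S.Q (d-1) (u + (d:ℂ) - 1) * S.Q d (u + (d:ℂ) + 2) * S.Q (d+1) (u + (d:ℂ) - 1))
      / (S.Q (d-1) (u + (d:ℂ) - 1) * S.Q (d+1) (u + (d:ℂ) + 1)) with hF
  have hc : ∀ (b : ℕ) (c : ℂ), Continuous fun u : ℂ => S.Q b (u + (d:ℂ) + c) :=
    fun b c => (S.Q_differentiable b).continuous.comp (by continuity)
  have hc' : ∀ (b : ℕ) (c : ℂ), Continuous fun u : ℂ => S.Q b (u + (d:ℂ) - c) := by
    intro b c
    have := hc b (-c)
    simpa [sub_eq_add_neg] using this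
  have e1 : (-(d:ℂ) + x) + (d:ℂ) + 1 = x + 1 := by ring
  have e2 : (-(d:ℂ) + x) + (d:ℂ) - 2 = x - 2 := by ring
  have e3 : (-(d:ℂ) + x) + (d:ℂ) - 1 = x - 1 := by ring
  have e4 : (-(d:ℂ) + x) + (d:ℂ) + 2 = x + 2 := by ring
  have hden : S.Q (d-1) ((-(d:ℂ) + x) + (d:ℂ) - 1) * S.Q (d+1) ((-(d:ℂ) + x) + (d:ℂ) + 1) ≠ 0 := by
    rw [e3, e1]; exact mul_ne_zero hne1 hne2
  have hTB : Tendsto F (𝓝[≠] (-(d : ℂ) + x)) (𝓝 0) := by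
    have hcont : ContinuousAt F (-(d : ℂ) + x) := by
      apply ContinuousAt.div
      · exact (((((hc (d-1) 1).mul (hc' d 2)).mul (hc (d+1) 1)).add
          (((hc' (d-1) 1).mul (hc d 2)).mul (hc' (d+1) 1))).continuousAt)
      · exact ((hc' (d-1) 1).mul (hc (d+1) 1)).continuousAt
      · exact hden
    have hval : F (-(d : ℂ) + x) = 0 := by
      rw [hF]
      simp only [e1, e2, e3, e4]
      rw [hsum, zero_div]
    rw [← hval]
    exact hcont.continuousWithinAt.tendsto
  -- eventual nonvanishing of denominators
  have hev1 : ∀ᶠ u in 𝓝[≠] (-(d : ℂ) + x), S.Q (d-1) (u + (d:ℂ) - 1) ≠ 0 := by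
    apply Filter.Eventually.filter_mono nhdsWithin_le_nhds
    exact ((hc' (d-1) 1).continuousAt).eventually_ne (by rw [e3] at *; exact hne1)
  have hev2 : ∀ᶠ u in 𝓝[≠] (-(d : ℂ) + x), S.Q (d+1) (u + (d:ℂ) + 1) ≠ 0 := by
    apply Filter.Eventually.filter_mono nhdsWithin_le_nhds
    exact ((hc (d+1) 1).continuousAt).eventually_ne (by rw [e1] at *; exact hne2)
  have hev3 : ∀ᶠ u in 𝓝[≠] (-(d : ℂ) + x), S.Q d (u + (d:ℂ)) ≠ 0 := by
    have h0 := hslope.eventually_ne hD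
    filter_upwards [hmap.eventually h0] with u hu hQ
    exact hu (by rw [hQ, zero_div])
  have heq : ∀ᶠ u in 𝓝[≠] (-(d : ℂ) + x),
      (u + (d:ℂ) - x) / S.Q d (u + (d:ℂ)) * F u
        = (u + (d : ℂ) - x) * (S.z d u + S.z (d + 1) u) := by
    filter_upwards [hev1, hev2, hev3] with u h1 h2 h3
    rw [hF]
    simp only [Setup.z, if_pos (show d ≤ r + 1 by omega), if_pos (show d + 1 ≤ r + 1 by omega),
      Setup.psi, Nat.add_sub_cancel, Nat.cast_add, Nat.cast_one, one_mul]
    rw [show u + ((d:ℂ)+1) + 1 = u + (d:ℂ) + 2 by ring,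
        show u + ((d:ℂ)+1) - 2 = u + (d:ℂ) - 1 by ring,
        show u + ((d:ℂ)+1) - 1 = u + (d:ℂ) by ring,
        show u + ((d:ℂ)+1) = u + (d:ℂ) + 1 by ring]
    field_simp
  have hfinal := (hA.mul hTB).congr' heq
  simpa using hfinal

lemma bae_sum (S : Setup r s) (hBAE : S.BAE) (hGen : S.Generic) (d : ℕ)
    (hd1 : 1 ≤ d) (hd2 : d ≤ r) (hlt : d - 1 < r + s + 1)
    (k : Fin (S.Nb ⟨d - 1, hlt⟩)) :
    S.Q (d-1) (S.root ⟨d-1,hlt⟩ k + 1) * S.Q d (S.root ⟨d-1,hlt⟩ k - 2)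
        * S.Q (d+1) (S.root ⟨d-1,hlt⟩ k + 1)
      + S.Q (d-1) (S.root ⟨d-1,hlt⟩ k - 1) * S.Q d (S.root ⟨d-1,hlt⟩ k + 2)
        * S.Q (d+1) (S.root ⟨d-1,hlt⟩ k - 1) = 0 := by
  set x : ℂ := S.root ⟨d-1,hlt⟩ k with hx
  have key : ∀ (b : ℕ) (m : ℤ), b ≤ r + s + 1 → (b ≠ d ∨ m ≠ 0) →
      S.Q b (x + (m : ℂ)) ≠ 0 := by
    intro b m hb h
    rcases Nat.eq_zero_or_pos b with hb0 | hb1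
    · subst hb0; simp [Setup.Q]
    · refine hGen.2 ⟨d-1,hlt⟩ k b m hb1 hb ?_
      rcases h with h | h
      · left; simpa using fun he => h (by omega)
      · right; exact h
  have hA1 : S.Q (d-1) (x+1) ≠ 0 := by
    simpa using key (d-1) 1 (by omega) (Or.inr (by norm_num))
  have hA2 : S.Q d (x-2) ≠ 0 := by
    simpa [sub_eq_add_neg] using key d (-2) (by omega) (Or.inr (by norm_num))
  have hA3 : S.Q (d+1) (x+1) ≠ 0 := by
    simpa using key (d+1) 1 (by omega) (Or.inr (by norm_num))
  have hB1 : S.Q (d-1) (x-1) ≠ 0 := by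
    simpa [sub_eq_add_neg] using key (d-1) (-1) (by omega) (Or.inr (by norm_num))
  have hB2 : S.Q d (x+2) ≠ 0 := by
    simpa using key d 2 (by omega) (Or.inr (by norm_num))
  have hB3 : S.Q (d+1) (x-1) ≠ 0 := by
    simpa [sub_eq_add_neg] using key (d+1) (-1) (by omega) (Or.inr (by norm_num))
  have hbae := hBAE ⟨d-1,hlt⟩ k
  have hidx : d - 1 + 1 = d := by omega
  have hcond1 : ¬ (d = r + 1) := by omega
  have hcond2 : d ≤ r + 1 := by omega
  simp only [← hx, hidx, hcond2, hcond1, if_true, if_false, ite_true, ite_false,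
    eq_self_iff_true, zero_mul, zero_div, add_zero, sub_zero, pow_zero, one_mul] at hbae
  -- evaluate the RHS product
  have hR : (∏ b : Fin (r+s+1),
        S.Q (b.1+1) (x + (cartan r d (b.1+1) : ℂ)) / S.Q (b.1+1) (x - (cartan r d (b.1+1) : ℂ)))
      = (S.Q (d-1) (x-1) / S.Q (d-1) (x+1)) * (S.Q d (x+2) / S.Q d (x-2))
        * (S.Q (d+1) (x-1) / S.Q (d+1) (x+1)) := by
    set g : ℕ → ℂ := fun c => S.Q c (x + (cartan r d c : ℂ)) / S.Q c (x - (cartan r d c : ℂ))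
      with hg
    have h1 : (∏ b : Fin (r+s+1), g (b.1+1)) = ∏ i ∈ Finset.range (r+s+1), g (i+1) :=
      Fin.prod_univ_eq_prod_range (fun i => g (i+1)) (r+s+1)
    have g0 : g 0 = 1 := by simp [hg, Setup.Q]
    have h2 : (∏ i ∈ Finset.range (r+s+1), g (i+1)) = ∏ c ∈ Finset.range (r+s+2), g c := by
      conv_rhs => rw [Finset.prod_range_succ']
      rw [g0, mul_one]
    have hsub : ({d-1, d, d+1} : Finset ℕ) ⊆ Finset.range (r+s+2) := by
      intro c hc
      simp only [Finset.mem_insert, Finset.mem_singleton] at hc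
      simp only [Finset.mem_range]
      omega
    have h3 : (∏ c ∈ Finset.range (r+s+2), g c) = ∏ c ∈ ({d-1, d, d+1} : Finset ℕ), g c := by
      refine (Finset.prod_subset hsub ?_).symm
      intro c hc hcn
      simp only [Finset.mem_insert, Finset.mem_singleton] at hcn
      push_neg at hcn
      simp only [Finset.mem_range] at hc
      have hc0 : cartan r d c = 0 := by
        simp only [cartan]; split_ifs <;> omega
      have hcd : c ≠ d := hcn.2.1
      have hQc : S.Q c x ≠ 0 := by
        rcases Nat.eq_zero_or_pos c with h0 | h1
        · subst h0; simp [Setup.Q]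
        · simpa using key c 0 (by omega) (Or.inl hcd)
      simp [hg, hc0, div_self hQc]
    have hnd1 : (d-1) ∉ ({d, d+1} : Finset ℕ) := by
      simp only [Finset.mem_insert, Finset.mem_singleton]; omega
    have hnd2 : d ∉ ({d+1} : Finset ℕ) := by
      simp only [Finset.mem_singleton]; omega
    have c1 : cartan r d (d-1) = -1 := by
      have k1 : ¬ (d = d - 1) := by omega
      have k2 : (d - 1 = d + 1 ∨ d = (d - 1) + 1) := by omega
      have k3 : min d (d-1) ≤ r := by omega
      simp [cartan, k1, k2, k3] <;> omega
    have c2 : cartan r d d = 2 := by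
      simp [cartan, hd2] <;> omega
    have c3 : cartan r d (d+1) = -1 := by
      have k1 : ¬ (d = d + 1) := by omega
      have k3 : min d (d+1) ≤ r := by omega
      simp [cartan, k1, k3] <;> omega
    calc (∏ b : Fin (r+s+1), g (b.1+1))
        = ∏ c ∈ ({d-1, d, d+1} : Finset ℕ), g c := by rw [h1, h2, h3]
      _ = g (d-1) * (g d * g (d+1)) := by
          rw [Finset.prod_insert hnd1, Finset.prod_insert hnd2, Finset.prod_singleton]
      _ = _ := by
          rw [hg]
          simp only [c1, c2, c3]
          push_cast
          rw [show x + (-1 : ℂ) = x - 1 by ring, show x - (-1 : ℂ) = x + 1 by ring]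
          ring
  rw [hR] at hbae
  have hRne : (S.Q (d-1) (x-1) / S.Q (d-1) (x+1)) * (S.Q d (x+2) / S.Q d (x-2))
      * (S.Q (d+1) (x-1) / S.Q (d+1) (x+1)) ≠ 0 :=
    mul_ne_zero (mul_ne_zero (div_ne_zero hB1 hA1) (div_ne_zero hB2 hA2))
      (div_ne_zero hB3 hA3)
  have hP : (∏ j : Fin S.L, S.br (x - S.w j) / S.br (x - S.w j)) = 0 ∨
      (∏ j : Fin S.L, S.br (x - S.w j) / S.br (x - S.w j)) = 1 := by
    by_cases h : ∀ j : Fin S.L, S.br (x - S.w j) ≠ 0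
    · right; exact Finset.prod_eq_one fun j _ => div_self (h j)
    · left
      push_neg at h
      obtain ⟨j, hj⟩ := h
      exact Finset.prod_eq_zero (Finset.mem_univ j) (by rw [hj, div_zero])
  rcases hP with h | h
  · rw [h, neg_zero] at hbae
    exact absurd hbae.symm hRne
  · rw [h] at hbae
    have hprod := hbae.symm
    field_simp at hprod
    linear_combination hprod

/-- Residue cancellation at colors `1,…,r`.  Assume the Bethe ansatz
equations hold (Bethe roots generic).  Then for every `d` with `1 ≤ d ≤ r` and every
`k ∈ {1,…,N_d}`, the residue of `z(d;u) + z(d+1;u)` at `u = −d + u_k^{(d)}` vanishes: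
`lim_{u → −d + u_k^{(d)}} (u + d − u_k^{(d)})·(z(d;u) + z(d+1;u)) = 0`. -/
theorem residue_cancellation_low (r s : ℕ) (S : Setup r s)
    (hBAE : S.BAE) (hGen : S.Generic)
    (d : ℕ) (hd1 : 1 ≤ d) (hd2 : d ≤ r)
    (k : Fin (S.Nb ⟨d - 1, by omega⟩)) :
    Filter.Tendsto
      (fun u : ℂ => (u + (d : ℂ) - S.root ⟨d - 1, by omega⟩ k) *
        (S.z d u + S.z (d + 1) u))
      (𝓝[≠] (-(d : ℂ) + S.root ⟨d - 1, by omega⟩ k)) (𝓝 0) := by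
  have hlt : d - 1 < r + s + 1 := by omega
  have hsum := bae_sum S hBAE hGen d hd1 hd2 hlt k
  have hQdx : S.Q d (S.root ⟨d-1,hlt⟩ k) = 0 := by
    have hc : 1 ≤ d ∧ d ≤ r + s + 1 := ⟨hd1, by omega⟩
    rw [Setup.Q, dif_pos hc]
    exact Finset.prod_eq_zero (Finset.mem_univ k) (by simp [Setup.br])
  have hD : deriv (S.Q d) (S.root ⟨d-1,hlt⟩ k) ≠ 0 := by
    have h := hGen.1 ⟨d-1,hlt⟩ k
    have hv : (⟨d-1,hlt⟩ : Fin (r+s+1)).1 = d - 1 := rfl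
    have hv2 : (⟨d-1,hlt⟩ : Fin (r+s+1)).1 + 1 = d := by rw [hv]; omega
    rwa [hv2] at h
  have hne1 : S.Q (d-1) (S.root ⟨d-1,hlt⟩ k - 1) ≠ 0 := by
    simpa [sub_eq_add_neg] using
      key_ne S hGen d hd1 hlt k (d-1) (-1) (by omega) (Or.inr (by norm_num))
  have hne2 : S.Q (d+1) (S.root ⟨d-1,hlt⟩ k + 1) ≠ 0 := by
    simpa using key_ne S hGen d hd1 hlt k (d+1) 1 (by omega) (Or.inr (by norm_num))
  exact main_aux S d hd1 hd2 (S.root ⟨d-1,hlt⟩ k) hQdx hD hsum hne1 hne2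


end AnalyticBethe
end

section
/- (Combinatorial step in the proof of Lemma 5, part 2) Let ν be a partition and let b be an admissible tableau on ν all of whose entries lie in J₋ = {r+2,…,r+s+2}. Then the set of cells of ν carrying the entry r+2 is exactly {(1,1),(2,1),…,(k,1)} for some k with 0 ≤ k ≤ ν₁′; that is, the entry r+2 appears only in the first column, consecutively from the top. -/
open Complex Filter Topology

namespace AnalyticBethe

variable {r s : ℕ}

private lemma mem_cells_empty {nu : YD} {p : ℕ × ℕ} :
    p ∈ cells emptyYD nu ↔ 1 ≤ p.1 ∧ p.1 ≤ nu.len ∧ 1 ≤ p.2 ∧ p.2 ≤ nu.part (p.1 - 1) := by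
  rw [cells, Finset.mem_filter, Finset.mem_product, Finset.mem_Icc, Finset.mem_Icc]
  simp only [emptyYD]
  constructor
  · rintro ⟨⟨⟨h1, h2⟩, h3, h4⟩, h5, h6⟩
    exact ⟨h1, h2, h3, h6⟩
  · rintro ⟨h1, h2, h3, h4⟩
    have : nu.part (p.1 - 1) ≤ nu.part 0 := nu.anti (Nat.zero_le _)
    exact ⟨⟨⟨h1, h2⟩, h3, le_trans h4 this⟩, h3, h4⟩

/-- combinatorial step in the proof of Lemma 5, part 2: if `b` is an
admissible tableau on a partition `ν` all of whose entries lie in `J₋`, then the cells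
carrying the entry `r+2` are exactly `{(1,1),…,(k,1)}` for some `0 ≤ k ≤ ν₁′`:
the entry `r+2` appears only in the first column, consecutively from the top. -/
theorem rPlus2_first_column (r s : ℕ) (nu : YD)
    (t : Tab r s emptyYD nu) (ht : Adm r s emptyYD nu t)
    (hJm : ∀ q : Cell emptyYD nu, r + 2 ≤ entry t q) :
    ∃ k : ℕ, k ≤ nu.conj 0 ∧
      ∀ q : Cell emptyYD nu, entry t q = r + 2 ↔ (q.1.2 = 1 ∧ q.1.1 ≤ k) := by
  classical
  -- entry r+2 forces first column
  have hcol1 : ∀ q : Cell emptyYD nu, entry t q = r + 2 → q.1.2 = 1 := by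
    intro q hq
    by_contra h
    have hm := mem_cells_empty.mp q.2
    have h2 : 2 ≤ q.1.2 := by omega
    have hp : (q.1.1, q.1.2 - 1) ∈ cells emptyYD nu := by
      rw [mem_cells_empty]
      exact ⟨hm.1, hm.2.1, by omega, le_trans (by omega) hm.2.2.2⟩
    have hrow := (ht ⟨_, hp⟩ q).1 ⟨rfl, by show (↑q : ℕ × ℕ).2 = (↑q : ℕ × ℕ).2 - 1 + 1; omega⟩
    have hle : entry t ⟨_, hp⟩ ≤ entry t q := hrow.1
    have h1 : r + 2 ≤ entry t ⟨_, hp⟩ := hJm ⟨_, hp⟩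
    have heq : entry t ⟨_, hp⟩ = entry t q := by omega
    have := hrow.2 heq
    omega
  -- column monotonicity
  have hcolmono : ∀ i i', 1 ≤ i → i ≤ i' → ∀ h' : (i', 1) ∈ cells emptyYD nu,
      ∃ h : (i, 1) ∈ cells emptyYD nu, entry t ⟨(i, 1), h⟩ ≤ entry t ⟨(i', 1), h'⟩ := by
    intro i i' hi hii'
    induction i', hii' using Nat.le_induction with
    | base => intro h'; exact ⟨h', le_refl _⟩
    | succ n hn IH =>
      intro h'
      have hm := mem_cells_empty.mp h'
      have hp : (n, 1) ∈ cells emptyYD nu := by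
        rw [mem_cells_empty]
        have hanti : nu.part n ≤ nu.part (n - 1) := nu.anti (by omega)
        have hm' : 1 ≤ nu.part n := by simpa using hm.2.2.2
        have hmlen : n + 1 ≤ nu.len := hm.2.1
        refine ⟨?_, ?_, le_refl _, ?_⟩
        · show 1 ≤ n; omega
        · show n ≤ nu.len; omega
        · show 1 ≤ nu.part (n - 1); omega
      have hstep := (ht ⟨(n, 1), hp⟩ ⟨(n + 1, 1), h'⟩).2 ⟨rfl, rfl⟩
      obtain ⟨h, hle⟩ := IH hp
      exact ⟨h, le_trans hle hstep.1⟩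
  set P : ℕ → Prop := fun i => ∃ h : (i, 1) ∈ cells emptyYD nu, entry t ⟨(i, 1), h⟩ = r + 2
    with hP
  set T : Finset ℕ := (Finset.Icc 1 nu.len).filter P with hT
  by_cases hne : T.Nonempty
  · refine ⟨T.max' hne, ?_, ?_⟩
    · -- k ≤ nu.conj 0
      have hkmem := Finset.mem_filter.mp (T.max'_mem hne)
      obtain ⟨hk12, hkcell, _⟩ := hkmem
      obtain ⟨hk1, hk2⟩ := Finset.mem_Icc.mp hk12
      have hkc := mem_cells_empty.mp hkcell
      have hkc4 : 1 ≤ nu.part (T.max' hne - 1) := hkc.2.2.2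
      have hsub : Finset.range (T.max' hne) ⊆
          (Finset.range nu.len).filter (fun i => 0 < nu.part i) := by
        intro i hi
        rw [Finset.mem_range] at hi
        rw [Finset.mem_filter, Finset.mem_range]
        have : nu.part (T.max' hne - 1) ≤ nu.part i := nu.anti (by omega)
        exact ⟨by omega, by omega⟩
      have := Finset.card_le_card hsub
      simpa [YD.conj] using this
    · rintro ⟨⟨i, j⟩, hq⟩
      constructor
      · intro he
        have hj : j = 1 := hcol1 _ he
        subst hj
        have hm := mem_cells_empty.mp hq
        have hiT : i ∈ T :=
          Finset.mem_filter.mpr ⟨Finset.mem_Icc.mpr ⟨hm.1, hm.2.1⟩, hq, he⟩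
        exact ⟨rfl, T.le_max' i hiT⟩
      · rintro ⟨hj, hik⟩
        subst hj
        have hm := mem_cells_empty.mp hq
        have hkmem := Finset.mem_filter.mp (T.max'_mem hne)
        obtain ⟨_, hkcell, hke⟩ := hkmem
        have hik' : i ≤ T.max' hne := hik
        obtain ⟨h, hle⟩ := hcolmono i (T.max' hne) hm.1 hik' hkcell
        have h1 := hJm (⟨(i, 1), h⟩ : Cell emptyYD nu)
        have h2 : entry t ⟨(i, 1), h⟩ = r + 2 := by omega
        exact h2
  · refine ⟨0, Nat.zero_le _, ?_⟩
    rintro ⟨⟨i, j⟩, hq⟩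
    constructor
    · intro he
      have hj : j = 1 := hcol1 _ he
      subst hj
      have hm := mem_cells_empty.mp hq
      exact absurd ⟨i, Finset.mem_filter.mpr
        ⟨Finset.mem_Icc.mpr ⟨hm.1, hm.2.1⟩, hq, he⟩⟩ hne
    · rintro ⟨hj, hik⟩
      have hik' : i ≤ 0 := hik
      have hm := mem_cells_empty.mp hq
      have : 1 ≤ i := hm.1
      omega

end AnalyticBethe
end

section
/- (Functional relation in the continuous parameter) Let μ be a partition with μ₁′ ≥ r+1 and μ_{r+1} ≥ s+1. Then for all c, d ∈ ℂ and all u ∈ ℂ, T̃_{μ;c}(u − d)·T̃_{μ;c}(u + d) = T̃_{μ;c−d}(u)·T̃_{μ;c+d}(u). -/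
open Complex Filter Topology

namespace AnalyticBethe

variable {r s : ℕ}

/-- functional relation in the continuous parameter: let `μ` be a
partition with `μ₁′ ≥ r+1` and `μ_{r+1} ≥ s+1`.  Then for all `c, d, u ∈ ℂ`,
`T̃_{μ;c}(u − d)·T̃_{μ;c}(u + d) = T̃_{μ;c−d}(u)·T̃_{μ;c+d}(u)`. -/
theorem Ttilde_functional_relation (r s : ℕ) (S : Setup r s) (mu : YD)
    (h1 : r + 1 ≤ mu.conj 0) (h2 : s + 1 ≤ mu.part r)
    (c d u : ℂ) :
    Ttilde S mu c (u - d) * Ttilde S mu c (u + d) =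
      Ttilde S mu (c - d) u * Ttilde S mu (c + d) u := by
  unfold Ttilde
  ring_nf

end AnalyticBethe
end
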